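/- (Hilbert's fourth problem, constant curvature +1.) Let P(x,y) = −⟨x,y⟩/(1+|x|²) on ℝⁿ × (ℝⁿ∖{0}) and consider the projectively flat spray G^i = P y^i, with N^j_i = ∂G^j/∂y^i. Let F²(x,y) = (|y|²(1+|x|²) − ⟨x,y⟩²)/(1+|x|²)². Then: (1) F² > 0 for all y ≠ 0; (2) the Ricci scalar satisfies ρ := P² − S₀P = F², where S₀P = Σ_k y^k ∂P/∂x^k; (3) d_hF² = 0, i.e. ∂F²/∂x^i = Σ_j N^j_i ∂F²/∂y^j for all i. Hence the spray is metrizable by this metric, of constant flag curvature κ = ρ/F² = 1. -/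

import Mathlib

open Real Finset

/-- Partial derivative with respect to the base coordinate `x^i`. -/
noncomputable def pdx {n : ℕ} (f : ((Fin n → ℝ) × (Fin n → ℝ)) → ℝ) (i : Fin n)
    (p : (Fin n → ℝ) × (Fin n → ℝ)) : ℝ :=
  fderiv ℝ f p (Pi.single i 1, 0)

/-- Partial derivative with respect to the fibre coordinate `y^i`. -/
noncomputable def pdy {n : ℕ} (f : ((Fin n → ℝ) × (Fin n → ℝ)) → ℝ) (i : Fin n)
    (p : (Fin n → ℝ) × (Fin n → ℝ)) : ℝ :=
  fderiv ℝ f p (0, Pi.single i 1)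

/-- Partial derivative of a function on the base with respect to `x^i`. -/
noncomputable def pdb {n : ℕ} (f : (Fin n → ℝ) → ℝ) (i : Fin n) (x : Fin n → ℝ) : ℝ :=
  fderiv ℝ f x (Pi.single i 1)

/-- Partial derivative with respect to the full coordinates `(x, y)` of `ℝ²ⁿ`,
indexed by `Fin n ⊕ Fin n` (`inl` = base directions, `inr` = fibre directions). -/
noncomputable def pdz {n : ℕ} (f : ((Fin n → ℝ) × (Fin n → ℝ)) → ℝ) (a : Fin n ⊕ Fin n)
    (p : (Fin n → ℝ) × (Fin n → ℝ)) : ℝ :=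
  match a with
  | Sum.inl i => pdx f i p
  | Sum.inr i => pdy f i p

/-- The spray vector field `S = yᵏ ∂/∂xᵏ - 2Gᵏ ∂/∂yᵏ` applied to a function. -/
noncomputable def sprayOp {n : ℕ} (G : Fin n → ((Fin n → ℝ) × (Fin n → ℝ)) → ℝ)
    (f : ((Fin n → ℝ) × (Fin n → ℝ)) → ℝ) (p : (Fin n → ℝ) × (Fin n → ℝ)) : ℝ :=
  ∑ k, (p.2 k * pdx f k p - 2 * G k p * pdy f k p)

/-- The flat spray `S₀ = yᵏ ∂/∂xᵏ` applied to a function. -/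
noncomputable def flatOp {n : ℕ} (f : ((Fin n → ℝ) × (Fin n → ℝ)) → ℝ)
    (p : (Fin n → ℝ) × (Fin n → ℝ)) : ℝ :=
  ∑ k, p.2 k * pdx f k p

/-- The coefficients `N^i_j = ∂G^i/∂y^j` of the nonlinear connection. -/
noncomputable def Ncon {n : ℕ} (G : Fin n → ((Fin n → ℝ) × (Fin n → ℝ)) → ℝ)
    (i j : Fin n) : ((Fin n → ℝ) × (Fin n → ℝ)) → ℝ :=
  fun p => pdy (G i) j p

/-- The components `R^i_j = 2 ∂G^i/∂x^j - S(N^i_j) - N^i_k N^k_j` of the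
Jacobi endomorphism. -/
noncomputable def jacobiR {n : ℕ} (G : Fin n → ((Fin n → ℝ) × (Fin n → ℝ)) → ℝ)
    (i j : Fin n) (p : (Fin n → ℝ) × (Fin n → ℝ)) : ℝ :=
  2 * pdx (G i) j p - sprayOp G (Ncon G i j) p - ∑ k, Ncon G i k p * Ncon G k j p

/-- The domain `Ω × (ℝⁿ ∖ {0})`. -/
def sprayDom {n : ℕ} (Ω : Set (Fin n → ℝ)) : Set ((Fin n → ℝ) × (Fin n → ℝ)) :=
  Ω ×ˢ {y | y ≠ 0}

/-- Squared Euclidean norm `|v|²` on `ℝⁿ`. -/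
def nsq {n : ℕ} (v : Fin n → ℝ) : ℝ := ∑ i, v i ^ 2

/-- Euclidean inner product `⟨v, w⟩` on `ℝⁿ`. -/
def dotp {n : ℕ} (v w : Fin n → ℝ) : ℝ := ∑ i, v i * w i

namespace H4aux

variable {n : ℕ}

noncomputable def fstE (i : Fin n) : ((Fin n → ℝ) × (Fin n → ℝ)) →L[ℝ] ℝ :=
  (ContinuousLinearMap.proj i).comp (ContinuousLinearMap.fst ℝ _ _)

noncomputable def sndE (i : Fin n) : ((Fin n → ℝ) × (Fin n → ℝ)) →L[ℝ] ℝ :=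
  (ContinuousLinearMap.proj i).comp (ContinuousLinearMap.snd ℝ _ _)

@[simp] lemma fstE_apply (i : Fin n) (v : (Fin n → ℝ) × (Fin n → ℝ)) : fstE i v = v.1 i := rfl
@[simp] lemma sndE_apply (i : Fin n) (v : (Fin n → ℝ) × (Fin n → ℝ)) : sndE i v = v.2 i := rfl

lemma hasFDerivAt_fst (i : Fin n) (p : (Fin n → ℝ) × (Fin n → ℝ)) :
    HasFDerivAt (fun q : (Fin n → ℝ) × (Fin n → ℝ) => q.1 i) (fstE i) p :=
  (fstE i).hasFDerivAt

lemma hasFDerivAt_snd (i : Fin n) (p : (Fin n → ℝ) × (Fin n → ℝ)) :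
    HasFDerivAt (fun q : (Fin n → ℝ) × (Fin n → ℝ) => q.2 i) (sndE i) p :=
  (sndE i).hasFDerivAt

lemma hasFDerivAt_B (p : (Fin n → ℝ) × (Fin n → ℝ)) :
    HasFDerivAt (fun q : (Fin n → ℝ) × (Fin n → ℝ) => dotp q.1 q.2)
      (∑ i, (p.1 i • sndE i + p.2 i • fstE i)) p := by
  have h : ∀ i ∈ Finset.univ, HasFDerivAt
      (fun q : (Fin n → ℝ) × (Fin n → ℝ) => q.1 i * q.2 i)
      (p.1 i • sndE i + p.2 i • fstE i) p :=
    fun i _ => (hasFDerivAt_fst i p).mul (hasFDerivAt_snd i p)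
  simpa [dotp] using HasFDerivAt.fun_sum h

lemma hasFDerivAt_A (p : (Fin n → ℝ) × (Fin n → ℝ)) :
    HasFDerivAt (fun q : (Fin n → ℝ) × (Fin n → ℝ) => 1 + nsq q.1)
      (∑ i, (2 * p.1 i) • fstE i) p := by
  have h : ∀ i ∈ Finset.univ, HasFDerivAt
      (fun q : (Fin n → ℝ) × (Fin n → ℝ) => q.1 i ^ 2)
      ((2 * p.1 i) • fstE i) p := by
    intro i _
    have := (hasFDerivAt_fst i p).fun_mul (hasFDerivAt_fst i p)
    have e : (2 * p.1 i) • fstE i = p.1 i • fstE i + p.1 i • fstE i := by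
      rw [two_mul, add_smul]
    rw [e]
    simpa [pow_two] using this
  have := (HasFDerivAt.fun_sum h).const_add 1
  simpa [nsq] using this

lemma hasFDerivAt_NY (p : (Fin n → ℝ) × (Fin n → ℝ)) :
    HasFDerivAt (fun q : (Fin n → ℝ) × (Fin n → ℝ) => nsq q.2)
      (∑ i, (2 * p.2 i) • sndE i) p := by
  have h : ∀ i ∈ Finset.univ, HasFDerivAt
      (fun q : (Fin n → ℝ) × (Fin n → ℝ) => q.2 i ^ 2)
      ((2 * p.2 i) • sndE i) p := by
    intro i _
    have := (hasFDerivAt_snd i p).fun_mul (hasFDerivAt_snd i p)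
    have e : (2 * p.2 i) • sndE i = p.2 i • sndE i + p.2 i • sndE i := by
      rw [two_mul, add_smul]
    rw [e]
    simpa [pow_two] using this
  simpa [nsq] using HasFDerivAt.fun_sum h

lemma nsq_nonneg (v : Fin n → ℝ) : 0 ≤ nsq v :=
  Finset.sum_nonneg fun _ _ => sq_nonneg _

lemma A_pos (x : Fin n → ℝ) : 0 < 1 + nsq x := by
  have := nsq_nonneg x; linarith

lemma A_ne (x : Fin n → ℝ) : 1 + nsq x ≠ 0 := (A_pos x).ne'

lemma hasFDerivAt_invA (p : (Fin n → ℝ) × (Fin n → ℝ)) :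
    HasFDerivAt (fun q : (Fin n → ℝ) × (Fin n → ℝ) => (1 + nsq q.1)⁻¹)
      (-(((1 + nsq p.1) ^ 2)⁻¹ • ∑ i, (2 * p.1 i) • fstE i)) p := by
  have h := (hasDerivAt_inv (A_ne p.1)).comp_hasFDerivAt p (hasFDerivAt_A p)
  simpa [Function.comp_def] using h

lemma hasFDerivAt_P (p : (Fin n → ℝ) × (Fin n → ℝ)) :
    HasFDerivAt (fun q : (Fin n → ℝ) × (Fin n → ℝ) => -(dotp q.1 q.2) / (1 + nsq q.1))
      ((-(dotp p.1 p.2)) • (-(((1 + nsq p.1) ^ 2)⁻¹ • ∑ i, (2 * p.1 i) • fstE i)) +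
        (1 + nsq p.1)⁻¹ • (-(∑ i, (p.1 i • sndE i + p.2 i • fstE i)))) p := by
  have h := (hasFDerivAt_B p).fun_neg.fun_mul (hasFDerivAt_invA p)
  simpa only [div_eq_mul_inv] using h

lemma pdx_P (p : (Fin n → ℝ) × (Fin n → ℝ)) (i : Fin n) :
    pdx (fun q : (Fin n → ℝ) × (Fin n → ℝ) => -(dotp q.1 q.2) / (1 + nsq q.1)) i p =
      (-(p.2 i) * (1 + nsq p.1) + 2 * dotp p.1 p.2 * p.1 i) / (1 + nsq p.1) ^ 2 := by
  rw [pdx, (hasFDerivAt_P p).fderiv]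
  simp only [ContinuousLinearMap.add_apply, ContinuousLinearMap.smul_apply,
    ContinuousLinearMap.neg_apply, ContinuousLinearMap.coe_sum', Finset.sum_apply,
    fstE_apply, sndE_apply, Pi.single_apply]
  simp only [Prod.fst, Prod.snd, smul_eq_mul, mul_ite, mul_one, mul_zero, Pi.zero_apply,
    Finset.sum_ite_eq', Finset.mem_univ, if_true, add_zero, zero_add, mul_comm]
  have hA := A_ne p.1
  field_simp
  simp only [ite_mul, one_mul, zero_mul, Finset.sum_ite_eq', Finset.mem_univ, if_true]
  rw [show (∑ x, (0 + if x = i then p.2 x else 0)) = p.2 i by simp]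
  ring

lemma pdy_P (p : (Fin n → ℝ) × (Fin n → ℝ)) (i : Fin n) :
    pdy (fun q : (Fin n → ℝ) × (Fin n → ℝ) => -(dotp q.1 q.2) / (1 + nsq q.1)) i p =
      -(p.1 i) / (1 + nsq p.1) := by
  rw [pdy, (hasFDerivAt_P p).fderiv]
  simp only [ContinuousLinearMap.add_apply, ContinuousLinearMap.smul_apply,
    ContinuousLinearMap.neg_apply, ContinuousLinearMap.coe_sum', Finset.sum_apply,
    fstE_apply, sndE_apply, Pi.single_apply]
  simp only [Prod.fst, Prod.snd, smul_eq_mul, mul_ite, mul_one, mul_zero, Pi.zero_apply,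
    Finset.sum_ite_eq', Finset.mem_univ, if_true, add_zero, zero_add, sum_const_zero]
  have hA := A_ne p.1
  field_simp
  ring

end H4aux
namespace H4aux
variable {n : ℕ}

lemma hasFDerivAt_Bsq (p : (Fin n → ℝ) × (Fin n → ℝ)) :
    HasFDerivAt (fun q : (Fin n → ℝ) × (Fin n → ℝ) => dotp q.1 q.2 ^ 2)
      ((dotp p.1 p.2) • (∑ i, (p.1 i • sndE i + p.2 i • fstE i)) +
        (dotp p.1 p.2) • (∑ i, (p.1 i • sndE i + p.2 i • fstE i))) p := by
  simpa [pow_two] using (hasFDerivAt_B p).fun_mul (hasFDerivAt_B p)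

lemma hasFDerivAt_A2 (p : (Fin n → ℝ) × (Fin n → ℝ)) :
    HasFDerivAt (fun q : (Fin n → ℝ) × (Fin n → ℝ) => (1 + nsq q.1) ^ 2)
      ((1 + nsq p.1) • (∑ i, (2 * p.1 i) • fstE i) +
        (1 + nsq p.1) • (∑ i, (2 * p.1 i) • fstE i)) p := by
  simpa [pow_two] using (hasFDerivAt_A p).fun_mul (hasFDerivAt_A p)

lemma pdx_F (p : (Fin n → ℝ) × (Fin n → ℝ)) (i : Fin n) :
    pdx (fun q : (Fin n → ℝ) × (Fin n → ℝ) =>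
        (nsq q.2 * (1 + nsq q.1) - dotp q.1 q.2 ^ 2) / (1 + nsq q.1) ^ 2) i p =
      (-2 * nsq p.2 * (1 + nsq p.1) * p.1 i - 2 * (1 + nsq p.1) * dotp p.1 p.2 * p.2 i
        + 4 * dotp p.1 p.2 ^ 2 * p.1 i) / (1 + nsq p.1) ^ 3 := by
  have hnum := ((hasFDerivAt_NY p).fun_mul (hasFDerivAt_A p)).fun_sub (hasFDerivAt_Bsq p)
  have hAne2 : ((1 + nsq p.1) ^ 2) ≠ 0 := pow_ne_zero _ (A_ne p.1)
  have hinv := (hasDerivAt_inv hAne2).comp_hasFDerivAt p (hasFDerivAt_A2 p)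
  have h := hnum.fun_mul hinv
  have hfe : (fun q : (Fin n → ℝ) × (Fin n → ℝ) =>
      (nsq q.2 * (1 + nsq q.1) - dotp q.1 q.2 ^ 2) / (1 + nsq q.1) ^ 2) =
      (fun q : (Fin n → ℝ) × (Fin n → ℝ) =>
        (nsq q.2 * (1 + nsq q.1) - dotp q.1 q.2 ^ 2) *
          ((fun y : ℝ => y⁻¹) ∘ fun q : (Fin n → ℝ) × (Fin n → ℝ) => (1 + nsq q.1) ^ 2) q) := by
    funext q
    simp [div_eq_mul_inv, Function.comp]
  rw [pdx, hfe, h.fderiv]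
  simp only [ContinuousLinearMap.add_apply, ContinuousLinearMap.smul_apply,
    ContinuousLinearMap.neg_apply, ContinuousLinearMap.sub_apply, ContinuousLinearMap.coe_sum',
    Finset.sum_apply, fstE_apply, sndE_apply, Pi.single_apply, Function.comp]
  simp only [smul_eq_mul, mul_ite, mul_one, mul_zero, Pi.zero_apply,
    Finset.sum_ite_eq', Finset.mem_univ, if_true, add_zero, zero_add, sum_const_zero]
  have hA := A_ne p.1
  field_simp
  ring

lemma pdy_F (p : (Fin n → ℝ) × (Fin n → ℝ)) (j : Fin n) :
    pdy (fun q : (Fin n → ℝ) × (Fin n → ℝ) =>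
        (nsq q.2 * (1 + nsq q.1) - dotp q.1 q.2 ^ 2) / (1 + nsq q.1) ^ 2) j p =
      (2 * (1 + nsq p.1) * p.2 j - 2 * dotp p.1 p.2 * p.1 j) / (1 + nsq p.1) ^ 2 := by
  have hnum := ((hasFDerivAt_NY p).fun_mul (hasFDerivAt_A p)).fun_sub (hasFDerivAt_Bsq p)
  have hAne2 : ((1 + nsq p.1) ^ 2) ≠ 0 := pow_ne_zero _ (A_ne p.1)
  have hinv := (hasDerivAt_inv hAne2).comp_hasFDerivAt p (hasFDerivAt_A2 p)
  have h := hnum.fun_mul hinv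
  have hfe : (fun q : (Fin n → ℝ) × (Fin n → ℝ) =>
      (nsq q.2 * (1 + nsq q.1) - dotp q.1 q.2 ^ 2) / (1 + nsq q.1) ^ 2) =
      (fun q : (Fin n → ℝ) × (Fin n → ℝ) =>
        (nsq q.2 * (1 + nsq q.1) - dotp q.1 q.2 ^ 2) *
          ((fun y : ℝ => y⁻¹) ∘ fun q : (Fin n → ℝ) × (Fin n → ℝ) => (1 + nsq q.1) ^ 2) q) := by
    funext q
    simp [div_eq_mul_inv, Function.comp]
  rw [pdy, hfe, h.fderiv]
  simp only [ContinuousLinearMap.add_apply, ContinuousLinearMap.smul_apply,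
    ContinuousLinearMap.neg_apply, ContinuousLinearMap.sub_apply, ContinuousLinearMap.coe_sum',
    Finset.sum_apply, fstE_apply, sndE_apply, Pi.single_apply, Function.comp]
  simp only [smul_eq_mul, mul_ite, mul_one, mul_zero, Pi.zero_apply,
    Finset.sum_ite_eq', Finset.mem_univ, if_true, add_zero, zero_add, sum_const_zero]
  have hA := A_ne p.1
  field_simp
  ring

lemma Ncon_val (p : (Fin n → ℝ) × (Fin n → ℝ)) (j i : Fin n) :
    pdy (fun q : (Fin n → ℝ) × (Fin n → ℝ) =>
        -(dotp q.1 q.2) / (1 + nsq q.1) * q.2 j) i p =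
      -(p.1 i) / (1 + nsq p.1) * p.2 j +
        -(dotp p.1 p.2) / (1 + nsq p.1) * (if j = i then (1:ℝ) else 0) := by
  have h := (hasFDerivAt_P p).fun_mul (hasFDerivAt_snd j p)
  rw [pdy, h.fderiv]
  simp only [ContinuousLinearMap.add_apply, ContinuousLinearMap.smul_apply,
    ContinuousLinearMap.neg_apply, ContinuousLinearMap.coe_sum', Finset.sum_apply,
    fstE_apply, sndE_apply, Pi.single_apply]
  simp only [smul_eq_mul, mul_ite, mul_one, mul_zero, Pi.zero_apply,
    Finset.sum_ite_eq', Finset.mem_univ, if_true, add_zero, zero_add, sum_const_zero]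
  have hA := A_ne p.1
  rcases eq_or_ne j i with rfl | hne
  · simp only [if_true]
    field_simp
    ring
  · simp only [hne, if_false]
    field_simp
    ring

end H4aux
namespace H4aux
variable {n : ℕ}

lemma sum_mul_form (e c d : ℝ) (x y : Fin n → ℝ) :
    ∑ k, y k * ((c * y k + d * x k) / e) = (c * nsq y + d * dotp x y) / e := by
  have h1 : ∀ k ∈ Finset.univ, y k * ((c * y k + d * x k) / e) =
      (c * y k ^ 2 + d * (x k * y k)) / e := fun k _ => by ring
  rw [Finset.sum_congr rfl h1, ← Finset.sum_div, Finset.sum_add_distrib,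
    ← Finset.mul_sum, ← Finset.mul_sum, nsq, dotp]

end H4aux



open H4aux

/-- Hilbert's fourth problem, constant curvature `+1`. For
`P(x,y) = -⟨x,y⟩/(1+|x|²)` on `ℝⁿ × (ℝⁿ∖{0})` and `G^i = P y^i`, the metric
`F²(x,y) = (|y|²(1+|x|²) - ⟨x,y⟩²)/(1+|x|²)²` is positive, satisfies
`ρ = P² - S₀P = F²`, and `d_hF² = 0`; hence the spray is metrizable by this
metric, of constant flag curvature `κ = ρ/F² = 1`. -/
theorem hilbert_fourth_positive_curvature
    (n : ℕ)
    (P Fsq : ((Fin n → ℝ) × (Fin n → ℝ)) → ℝ)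
    (hP : ∀ p, P p = -(dotp p.1 p.2) / (1 + nsq p.1))
    (hFsq : ∀ p, Fsq p =
      (nsq p.2 * (1 + nsq p.1) - dotp p.1 p.2 ^ 2) / (1 + nsq p.1) ^ 2)
    (G : Fin n → ((Fin n → ℝ) × (Fin n → ℝ)) → ℝ)
    (hGdef : ∀ i p, G i p = P p * p.2 i) :
    ∀ p : (Fin n → ℝ) × (Fin n → ℝ), p.2 ≠ 0 →
      0 < Fsq p ∧
      P p ^ 2 - flatOp P p = Fsq p ∧
      (∀ i, pdx Fsq i p = ∑ j, Ncon G j i p * pdy Fsq j p) := by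
  intro p hy
  have hPf : P = fun q : (Fin n → ℝ) × (Fin n → ℝ) => -(dotp q.1 q.2) / (1 + nsq q.1) :=
    funext hP
  have hFf : Fsq = fun q : (Fin n → ℝ) × (Fin n → ℝ) =>
      (nsq q.2 * (1 + nsq q.1) - dotp q.1 q.2 ^ 2) / (1 + nsq q.1) ^ 2 := funext hFsq
  have hGf : ∀ j, G j = fun q : (Fin n → ℝ) × (Fin n → ℝ) =>
      -(dotp q.1 q.2) / (1 + nsq q.1) * q.2 j := fun j => funext fun q => by
    rw [hGdef, hP]
  have hA := A_ne p.1
  have hApos := A_pos p.1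
  refine ⟨?_, ?_, ?_⟩
  · rw [hFsq p]
    have hcs : dotp p.1 p.2 ^ 2 ≤ nsq p.1 * nsq p.2 := by
      simpa [dotp, nsq] using Finset.sum_mul_sq_le_sq_mul_sq Finset.univ p.1 p.2
    have hy' : 0 < nsq p.2 := by
      obtain ⟨i, hi⟩ := Function.ne_iff.mp hy
      exact Finset.sum_pos' (fun _ _ => sq_nonneg _) ⟨i, Finset.mem_univ i, sq_pos_of_ne_zero hi⟩
    refine div_pos ?_ (by positivity)
    nlinarith [nsq_nonneg p.1]
  · rw [hP p, hFsq p, flatOp, hPf]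
    have h1 : ∀ k ∈ Finset.univ, p.2 k *
        pdx (fun q : (Fin n → ℝ) × (Fin n → ℝ) => -(dotp q.1 q.2) / (1 + nsq q.1)) k p =
        p.2 k * (((-(1 + nsq p.1)) * p.2 k + (2 * dotp p.1 p.2) * p.1 k) /
          (1 + nsq p.1) ^ 2) := fun k _ => by
      rw [pdx_P]; ring
    rw [Finset.sum_congr rfl h1, sum_mul_form]
    field_simp
    ring
  · intro i
    simp only [Ncon]
    rw [hFf, pdx_F]
    have hN : ∀ j ∈ Finset.univ, pdy (G j) i p *
        pdy (fun q : (Fin n → ℝ) × (Fin n → ℝ) =>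
          (nsq q.2 * (1 + nsq q.1) - dotp q.1 q.2 ^ 2) / (1 + nsq q.1) ^ 2) j p =
        (-(p.1 i) / (1 + nsq p.1)) * (p.2 j *
            (((2 * (1 + nsq p.1)) * p.2 j + (-2 * dotp p.1 p.2) * p.1 j) / (1 + nsq p.1) ^ 2))
          + (if j = i then (-(dotp p.1 p.2) / (1 + nsq p.1)) *
              ((2 * (1 + nsq p.1) * p.2 j - 2 * dotp p.1 p.2 * p.1 j) / (1 + nsq p.1) ^ 2)
            else 0) := by
      intro j _
      rw [pdy_F, hGf j, Ncon_val]
      split_ifs <;> ring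
    rw [Finset.sum_congr rfl hN, Finset.sum_add_distrib, ← Finset.mul_sum, sum_mul_form,
      Finset.sum_ite_eq' Finset.univ i]
    simp only [Finset.mem_univ, if_true]
    field_simp
    ring
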